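/- Let a, b ≥ 0, let (Ω, 𝓕, P) be a probability space, and let X, Y : Ω → ℕ be random variables with Poisson marginal laws: P(X = n) = e^{−a} a^n / n! and P(Y = n) = e^{−b} b^n / n! for all n ∈ ℕ, and such that X·Y is integrable. Then E[X·Y] − a·b ≤ Σ_{m=0}^{∞} Σ_{n=0}^{∞} min{Ḡ_a(m), Ḡ_b(n)} − a·b; that is, the covariance of any pair of Poisson random variables with means a and b is at most the covariance of the comonotonic Poisson pair with the same means. -/

import Mathlib

open MeasureTheory
open scoped ENNReal NNReal

/-- The uniform probability measure on the open interval (0,1):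
Lebesgue measure restricted to (0,1). -/
noncomputable def unif : Measure ℝ := volume.restrict (Set.Ioo (0 : ℝ) 1)

/-- The quantile transform of a cdf `F` on ℕ: `q_F(u) = min {n : u ≤ F n}`. -/
noncomputable def qt (F : ℕ → ℝ) (u : ℝ) : ℕ := sInf {n : ℕ | u ≤ F n}

/-- The Poisson(λ) cumulative distribution function on ℕ. -/
noncomputable def poisCdf (l : ℝ) (n : ℕ) : ℝ :=
  ∑ k ∈ Finset.range (n + 1), Real.exp (-l) * l ^ k / (Nat.factorial k)

/-- The Poisson(λ) probability mass function on ℕ. -/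
noncomputable def poisPmf (l : ℝ) (n : ℕ) : ℝ :=
  Real.exp (-l) * l ^ n / (Nat.factorial n)

/-- `F(n-1)` with the convention `F(-1) = 0`. -/
noncomputable def cdfm1 (F : ℕ → ℝ) (n : ℕ) : ℝ := if n = 0 then 0 else F (n - 1)

lemma poisPmf_nonneg {a : ℝ} (ha : 0 ≤ a) (n : ℕ) : 0 ≤ poisPmf a n := by
  unfold poisPmf; positivity

lemma hasSum_poisPmf {a : ℝ} (ha : 0 ≤ a) : HasSum (poisPmf a) 1 := by
  have := ProbabilityTheory.poissonPMFRealSum a.toNNReal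
  show HasSum (fun n : ℕ => Real.exp (-a) * a ^ n / (Nat.factorial n)) 1
  simpa [ProbabilityTheory.poissonPMFReal, poisPmf, Real.coe_toNNReal a ha] using this

lemma poisCdf_eq (a : ℝ) (n : ℕ) :
    poisCdf a n = ∑ k ∈ Finset.range (n + 1), poisPmf a k := rfl

lemma poisCdf_le_one {a : ℝ} (ha : 0 ≤ a) (n : ℕ) : poisCdf a n ≤ 1 := by
  rw [poisCdf_eq]
  exact sum_le_hasSum _ (fun k _ => poisPmf_nonneg ha k) (hasSum_poisPmf ha)

lemma tail_eq {a : ℝ} (ha : 0 ≤ a) (n : ℕ) :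
    1 - poisCdf a n = ∑' k, poisPmf a (k + (n + 1)) := by
  have h := (hasSum_poisPmf ha).tsum_eq
  have := Summable.sum_add_tsum_nat_add (f := poisPmf a) (n + 1) (hasSum_poisPmf ha).summable
  rw [poisCdf_eq, ← h]
  linarith [this]

lemma tail_nonneg {a : ℝ} (ha : 0 ≤ a) (n : ℕ) : 0 ≤ 1 - poisCdf a n := by
  rw [tail_eq ha]
  exact tsum_nonneg fun k => poisPmf_nonneg ha _

lemma tail_le {a : ℝ} (ha : 0 ≤ a) (n : ℕ) :
    1 - poisCdf a n ≤ a ^ (n + 1) / (Nat.factorial (n + 1)) := by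
  rw [tail_eq ha]
  have hle : ∀ k : ℕ, poisPmf a (k + (n + 1)) ≤ a ^ (n + 1) / (Nat.factorial (n + 1)) * poisPmf a k := by
    intro k
    unfold poisPmf
    have hfac : (Nat.factorial k : ℝ) * (Nat.factorial (n + 1)) ≤ Nat.factorial (k + (n + 1)) := by
      exact_mod_cast Nat.le_of_dvd (Nat.factorial_pos _)
        (Nat.factorial_mul_factorial_dvd_factorial_add k (n + 1))
    have h1 : (0:ℝ) < Nat.factorial (k + (n + 1)) := by positivity
    have h2 : (0:ℝ) < (Nat.factorial k : ℝ) * Nat.factorial (n + 1) := by positivity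
    have heq : a ^ (n + 1) / ↑(Nat.factorial (n + 1)) * (Real.exp (-a) * a ^ k / ↑(Nat.factorial k))
        = Real.exp (-a) * a ^ (k + (n + 1)) / ((Nat.factorial k : ℝ) * Nat.factorial (n + 1)) := by
      rw [pow_add]; ring
    rw [heq, div_le_div_iff₀ h1 h2]
    have hnum : (0:ℝ) ≤ Real.exp (-a) * a ^ (k + (n + 1)) := by positivity
    exact mul_le_mul_of_nonneg_left hfac hnum
  have hsum2 : Summable (fun k => a ^ (n + 1) / (Nat.factorial (n + 1)) * poisPmf a k) :=
    (hasSum_poisPmf ha).summable.mul_left _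
  calc ∑' k, poisPmf a (k + (n + 1))
      ≤ ∑' k, a ^ (n + 1) / (Nat.factorial (n + 1)) * poisPmf a k := by
        apply Summable.tsum_le_tsum hle _ hsum2
        exact ((summable_nat_add_iff (n+1)).2 (hasSum_poisPmf ha).summable)
    _ = a ^ (n + 1) / (Nat.factorial (n + 1)) * 1 := by
        rw [tsum_mul_left, (hasSum_poisPmf ha).tsum_eq]
    _ = _ := mul_one _

lemma summable_sqrt_pow_div_fact {a : ℝ} (ha : 0 ≤ a) :
    Summable (fun m : ℕ => Real.sqrt (a ^ m / Nat.factorial m)) := by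
  apply summable_of_ratio_norm_eventually_le (r := 1/2) (by norm_num)
  filter_upwards [Filter.eventually_ge_atTop (⌈4 * a⌉₊)] with n hn
  have h1 : a / (n + 1) ≤ 1/4 := by
    rw [div_le_iff₀ (by positivity)]
    have : 4 * a ≤ n + 1 := le_trans (Nat.le_ceil _) (by exact_mod_cast le_trans hn (Nat.le_succ n))
    linarith
  have key : a ^ (n+1) / Nat.factorial (n+1) = (a / (n+1)) * (a ^ n / Nat.factorial n) := by
    rw [Nat.factorial_succ, pow_succ]
    push_cast
    field_simp
  rw [Real.norm_eq_abs, Real.norm_eq_abs, abs_of_nonneg (Real.sqrt_nonneg _),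
    abs_of_nonneg (Real.sqrt_nonneg _), key, Real.sqrt_mul (by positivity)]
  have : Real.sqrt (a / (n+1)) ≤ 1/2 := by
    rw [show (1:ℝ)/2 = Real.sqrt (1/4) by
      rw [show (1:ℝ)/4 = (1/2)^2 by norm_num, Real.sqrt_sq (by norm_num)]]
    exact Real.sqrt_le_sqrt h1
  exact mul_le_mul_of_nonneg_right this (Real.sqrt_nonneg _)

set_option maxHeartbeats 1000000 in
lemma summable_min {a b : ℝ} (ha : 0 ≤ a) (hb : 0 ≤ b) :
    Summable (fun p : ℕ × ℕ => min (1 - poisCdf a p.1) (1 - poisCdf b p.2)) := by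
  set f : ℕ → ℝ := fun m => Real.sqrt (a ^ (m + 1) / Nat.factorial (m + 1)) with hf
  set g : ℕ → ℝ := fun m => Real.sqrt (b ^ (m + 1) / Nat.factorial (m + 1)) with hg
  have hsf : Summable f := (summable_nat_add_iff 1).2 (summable_sqrt_pow_div_fact ha)
  have hsg : Summable g := (summable_nat_add_iff 1).2 (summable_sqrt_pow_div_fact hb)
  have hbig : Summable (fun p : ℕ × ℕ => f p.1 * g p.2) :=
    Summable.mul_of_nonneg hsf hsg (fun _ => Real.sqrt_nonneg _) (fun _ => Real.sqrt_nonneg _)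
  apply Summable.of_nonneg_of_le _ _ hbig
  · exact fun p => le_min (tail_nonneg ha _) (tail_nonneg hb _)
  · intro p
    have h1 : min (1 - poisCdf a p.1) (1 - poisCdf b p.2)
        ≤ Real.sqrt ((1 - poisCdf a p.1) * (1 - poisCdf b p.2)) := by
      rcases min_cases (1 - poisCdf a p.1) (1 - poisCdf b p.2) with ⟨h, hc⟩ | ⟨h, hc⟩
      · rw [h]
        nlinarith [Real.sq_sqrt (mul_nonneg (tail_nonneg ha p.1) (tail_nonneg hb p.2)),
          Real.sqrt_nonneg ((1 - poisCdf a p.1) * (1 - poisCdf b p.2)), tail_nonneg ha p.1]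
      · rw [h]
        nlinarith [Real.sq_sqrt (mul_nonneg (tail_nonneg ha p.1) (tail_nonneg hb p.2)),
          Real.sqrt_nonneg ((1 - poisCdf a p.1) * (1 - poisCdf b p.2)), tail_nonneg hb p.2]
    refine h1.trans ?_
    rw [Real.sqrt_mul (tail_nonneg ha p.1)]
    exact mul_le_mul (Real.sqrt_le_sqrt (tail_le ha p.1)) (Real.sqrt_le_sqrt (tail_le hb p.2))
      (Real.sqrt_nonneg _) (Real.sqrt_nonneg _)

lemma poisCdf_nonneg {a : ℝ} (ha : 0 ≤ a) (n : ℕ) : 0 ≤ poisCdf a n := by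
  rw [poisCdf_eq]; exact Finset.sum_nonneg fun k _ => poisPmf_nonneg ha k

lemma law_cdf {Ω : Type*} [MeasurableSpace Ω] (P : Measure Ω)
    {a : ℝ} (ha : 0 ≤ a) (X : Ω → ℕ) (hX : Measurable X)
    (hlaw : ∀ n : ℕ, P {w | X w = n} = ENNReal.ofReal (poisPmf a n)) (m : ℕ) :
    P {w | X w ≤ m} = ENNReal.ofReal (poisCdf a m) := by
  have hset : {w | X w ≤ m} = ⋃ n ∈ Finset.range (m + 1), {w | X w = n} := by
    ext w; simp [Nat.lt_succ_iff]
  rw [hset, measure_biUnion_finset]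
  · rw [poisCdf_eq, ENNReal.ofReal_sum_of_nonneg (fun k _ => poisPmf_nonneg ha k)]
    exact Finset.sum_congr rfl fun n _ => hlaw n
  · intro i _ j _ hij
    simp only [Set.disjoint_left]
    rintro w hwi hwj
    exact hij (hwi ▸ hwj.symm ▸ rfl)
  · intro n _
    exact hX (measurableSet_singleton n)

lemma law_surv {Ω : Type*} [MeasurableSpace Ω] (P : Measure Ω) [IsProbabilityMeasure P]
    {a : ℝ} (ha : 0 ≤ a) (X : Ω → ℕ) (hX : Measurable X)
    (hlaw : ∀ n : ℕ, P {w | X w = n} = ENNReal.ofReal (poisPmf a n)) (m : ℕ) :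
    P {w | m < X w} = ENNReal.ofReal (1 - poisCdf a m) := by
  have hset : {w | m < X w} = {w | X w ≤ m}ᶜ := by
    ext w; simp only [Set.mem_setOf_eq, Set.mem_compl_iff, not_le]
  have hms : MeasurableSet {w | X w ≤ m} := hX measurableSet_Iic
  rw [hset, prob_compl_eq_one_sub hms,
    law_cdf P ha X hX hlaw m, ENNReal.ofReal_sub _ (poisCdf_nonneg ha m), ENNReal.ofReal_one]


/-- The covariance of any pair of Poisson random variables with means `a` and `b` is at most
the covariance of the comonotonic Poisson pair with the same means. -/
theorem poisson_cov_le_comonotonic {Ω : Type*} [MeasurableSpace Ω]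
    (P : Measure Ω) [IsProbabilityMeasure P]
    (a b : ℝ) (ha : 0 ≤ a) (hb : 0 ≤ b)
    (X Y : Ω → ℕ) (hX : Measurable X) (hY : Measurable Y)
    (hlawX : ∀ n : ℕ, P {w | X w = n} = ENNReal.ofReal (poisPmf a n))
    (hlawY : ∀ n : ℕ, P {w | Y w = n} = ENNReal.ofReal (poisPmf b n))
    (hint : Integrable (fun w => (X w : ℝ) * (Y w : ℝ)) P) :
    ∫ w, (X w : ℝ) * (Y w : ℝ) ∂P - a * b
      ≤ (∑' p : ℕ × ℕ, min (1 - poisCdf a p.1) (1 - poisCdf b p.2)) - a * b := by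
  apply sub_le_sub_right
  set S : ℕ × ℕ → Set Ω := fun p => {w | p.1 < X w} ∩ {w | p.2 < Y w} with hS
  have hSm : ∀ p : ℕ × ℕ, MeasurableSet (S p) :=
    fun p => (hX measurableSet_Ioi).inter (hY measurableSet_Ioi)
  have count : ∀ k : ℕ, ∑' m : ℕ, (if m < k then (1:ℝ≥0∞) else 0) = k := by
    intro k
    have h0 : ∀ m ∉ Finset.range k, (if m < k then (1:ℝ≥0∞) else 0) = 0 := by
      intro m hm
      rw [if_neg]
      simpa using hm
    rw [tsum_eq_sum h0,
      Finset.sum_congr rfl (fun m hm => if_pos (Finset.mem_range.1 hm))]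
    simp
  have hpt : ∀ w, (X w : ℝ≥0∞) * (Y w : ℝ≥0∞) = ∑' p : ℕ × ℕ, (S p).indicator 1 w := by
    intro w
    have h1 : ∀ m n : ℕ, (S (m, n)).indicator (1 : Ω → ℝ≥0∞) w
        = (if m < X w then (1:ℝ≥0∞) else 0) * (if n < Y w then (1:ℝ≥0∞) else 0) := by
      intro m n
      by_cases h1 : m < X w <;> by_cases h2 : n < Y w <;>
        simp [Set.indicator_apply, hS, Set.mem_setOf_eq, h1, h2]
    rw [ENNReal.tsum_prod']
    simp_rw [h1]
    simp_rw [ENNReal.tsum_mul_left, count (Y w)]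
    rw [ENNReal.tsum_mul_right, count (X w)]
  have hL : ∫⁻ w, (X w : ℝ≥0∞) * (Y w : ℝ≥0∞) ∂P = ∑' p : ℕ × ℕ, P (S p) := by
    simp_rw [hpt]
    rw [lintegral_tsum (fun p => ((measurable_one.indicator (hSm p)).aemeasurable))]
    exact tsum_congr fun p => lintegral_indicator_one (hSm p)
  have hbound : ∀ p : ℕ × ℕ, P (S p)
      ≤ ENNReal.ofReal (min (1 - poisCdf a p.1) (1 - poisCdf b p.2)) := by
    intro p
    rcases min_cases (1 - poisCdf a p.1) (1 - poisCdf b p.2) with ⟨h, _⟩ | ⟨h, _⟩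
    · rw [h, ← law_surv P ha X hX hlawX p.1]
      exact measure_mono Set.inter_subset_left
    · rw [h, ← law_surv P hb Y hY hlawY p.2]
      exact measure_mono Set.inter_subset_right
  have hsummin := summable_min ha hb
  have hminnn : ∀ p : ℕ × ℕ, 0 ≤ min (1 - poisCdf a p.1) (1 - poisCdf b p.2) :=
    fun p => le_min (tail_nonneg ha _) (tail_nonneg hb _)
  have hLle : ∫⁻ w, (X w : ℝ≥0∞) * (Y w : ℝ≥0∞) ∂P
      ≤ ENNReal.ofReal (∑' p : ℕ × ℕ, min (1 - poisCdf a p.1) (1 - poisCdf b p.2)) := by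
    rw [hL, ENNReal.ofReal_tsum_of_nonneg hminnn hsummin]
    exact ENNReal.tsum_le_tsum hbound
  have hInt : ∫ w, (X w : ℝ) * (Y w : ℝ) ∂P
      = (∫⁻ w, (X w : ℝ≥0∞) * (Y w : ℝ≥0∞) ∂P).toReal := by
    rw [integral_eq_lintegral_of_nonneg_ae
      (Filter.Eventually.of_forall fun w => by positivity) hint.aestronglyMeasurable]
    congr 1
    apply lintegral_congr fun w => ?_
    rw [← Nat.cast_mul, ENNReal.ofReal_natCast, Nat.cast_mul]
  rw [hInt]
  calc (∫⁻ w, (X w : ℝ≥0∞) * (Y w : ℝ≥0∞) ∂P).toReal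
      ≤ (ENNReal.ofReal (∑' p : ℕ × ℕ, min (1 - poisCdf a p.1) (1 - poisCdf b p.2))).toReal :=
        ENNReal.toReal_mono ENNReal.ofReal_ne_top hLle
    _ = _ := ENNReal.toReal_ofReal (tsum_nonneg hminnn)
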